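/- arXiv:1202.1798 — 6 statements merged into one kernel-verified Lean document; each statement's English description precedes it below -/
import Mathlib

section
/- For fixed t > 0, H ∈ (0,1) with H ≠ 1/2, a < -t, and 0 < γ < min(1-H, 1/2), the integral ∫_{-∞}^{a} |∂_s F_t(s)| · (-s)^{1/2+γ} ds is finite, where F_t(s) = (-t-s)^{H-1/2} - (-s)^{H-1/2}. -/
open Real MeasureTheory

theorem deriv_F_weighted_integrable (t H a γ : ℝ) (ht : 0 < t) (hH0 : 0 < H)
    (hH1 : H < 1) (hHne : H ≠ 1/2) (ha : a < -t)
    (hγ0 : 0 < γ) (hγ : γ < min (1 - H) (1/2)) :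
    IntegrableOn
      (fun s : ℝ => |(H - 1/2) * ((-s) ^ (H - 3/2) - (-t - s) ^ (H - 3/2))|
        * (-s) ^ (1/2 + γ))
      (Set.Iio a) := by
  have hγH : γ < 1 - H := lt_of_lt_of_le hγ (min_le_left _ _)
  set B : ℝ := -t - a with hBdef
  have hB0 : 0 < B := by simp [hBdef]; linarith
  set C : ℝ := |H - 1/2| * ((3/2 - H) * t) * (1 + t / B) ^ (1/2 + γ) with hCdef
  have hg : IntegrableOn (fun s : ℝ => C * (-t - s) ^ (H - 2 + γ)) (Set.Iio a) := by
    have h1 : IntegrableOn (fun x : ℝ => x ^ (H - 2 + γ)) (Set.Ioi B) :=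
      integrableOn_Ioi_rpow_of_lt (by linarith) hB0
    have hmp : MeasurePreserving (fun s : ℝ => -t - s) volume volume := by
      have := (measurePreserving_add_left (volume : Measure ℝ) (-t)).comp
        (Measure.measurePreserving_neg (volume : Measure ℝ))
      simpa [Function.comp_def, sub_eq_add_neg] using this
    have hemb : MeasurableEmbedding (fun s : ℝ => -t - s) :=
      (MeasurableEquiv.subLeft (-t)).measurableEmbedding
    have h2 := (hmp.integrableOn_comp_preimage hemb
      (f := fun x : ℝ => x ^ (H - 2 + γ)) (s := Set.Ioi B)).mpr h1
    have hpre : (fun s : ℝ => -t - s) ⁻¹' Set.Ioi B = Set.Iio a := by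
      ext s
      simp only [Set.mem_preimage, Set.mem_Ioi, Set.mem_Iio, hBdef]
      constructor <;> intro h <;> linarith
    rw [hpre] at h2
    exact h2.const_mul C
  refine Integrable.mono' hg ?_ ?_
  · apply ContinuousOn.aestronglyMeasurable _ measurableSet_Iio
    have hcn : ContinuousOn (fun s : ℝ => -s) (Set.Iio a) := continuous_neg.continuousOn
    have hcn2 : ContinuousOn (fun s : ℝ => -t - s) (Set.Iio a) :=
      (continuous_const.sub continuous_id).continuousOn
    have c1 : ContinuousOn (fun s : ℝ => (-s) ^ (H - 3/2)) (Set.Iio a) :=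
      hcn.rpow_const (fun x hx => Or.inl (by simp only [Set.mem_Iio] at hx; intro h; nlinarith))
    have c2 : ContinuousOn (fun s : ℝ => (-t - s) ^ (H - 3/2)) (Set.Iio a) :=
      hcn2.rpow_const (fun x hx => Or.inl (by simp only [Set.mem_Iio] at hx; intro h; nlinarith))
    have c3 : ContinuousOn (fun s : ℝ => (-s) ^ (1/2 + γ)) (Set.Iio a) :=
      hcn.rpow_const (fun x hx => Or.inl (by simp only [Set.mem_Iio] at hx; intro h; nlinarith))
    exact (((c1.sub c2).const_smul (H - 1/2)).abs.mul c3)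
  · filter_upwards [ae_restrict_mem measurableSet_Iio] with s hs
    simp only [Set.mem_Iio] at hs
    set b : ℝ := -t - s with hbdef
    set c : ℝ := -s with hcdef
    have hBb : B ≤ b := by simp [hBdef, hbdef]; linarith
    have hb0 : 0 < b := lt_of_lt_of_le hB0 hBb
    have hc0 : 0 < c := by simp [hcdef]; nlinarith
    have hbc : b < c := by simp [hbdef, hcdef]; linarith
    set p : ℝ := H - 3/2 with hpdef
    -- MVT bound: b^p - c^p ≤ (3/2 - H) * b^(p-1) * t
    have hmvt : ‖c ^ p - b ^ p‖ ≤ ((3/2 - H) * b ^ (p - 1)) * ‖c - b‖ := by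
      apply Convex.norm_image_sub_le_of_norm_hasDerivWithin_le
        (f := fun u : ℝ => u ^ p) (f' := fun u : ℝ => p * u ^ (p - 1)) (s := Set.Icc b c)
        (hs := convex_Icc b c)
      · intro x hx
        exact (Real.hasDerivAt_rpow_const (Or.inl (by nlinarith [hx.1]))).hasDerivWithinAt
      · intro x hx
        have hx0 : 0 < x := lt_of_lt_of_le hb0 hx.1
        rw [Real.norm_eq_abs, abs_mul, abs_of_nonneg (le_of_lt (Real.rpow_pos_of_pos hx0 _))]
        have h1 : |p| = 3/2 - H := by rw [abs_of_nonpos (by simp [hpdef]; linarith)]; simp [hpdef]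
        rw [h1]
        have h2 : x ^ (p - 1) ≤ b ^ (p - 1) :=
          Real.rpow_le_rpow_of_nonpos hb0 hx.1 (by simp [hpdef]; linarith)
        nlinarith [h2]
      · exact ⟨le_refl b, hbc.le⟩
      · exact ⟨hbc.le, le_refl c⟩
    rw [Real.norm_eq_abs] at hmvt
    have hcb : ‖c - b‖ = t := by rw [Real.norm_eq_abs, abs_of_pos (by linarith)]; simp [hbdef, hcdef]; ring
    rw [hcb] at hmvt
    -- bound on c^(1/2+γ)
    have hcb2 : c ≤ b * (1 + t / B) := by
      have : t ≤ (t / B) * b := by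
        rw [div_mul_eq_mul_div, le_div_iff₀ hB0]
        nlinarith
      have hcbt : c = b + t := by simp [hbdef, hcdef]; ring
      nlinarith
    have hcpow : c ^ (1/2 + γ) ≤ b ^ (1/2 + γ) * (1 + t / B) ^ (1/2 + γ) := by
      rw [← Real.mul_rpow hb0.le (by positivity)]
      exact Real.rpow_le_rpow hc0.le hcb2 (by linarith)
    -- assemble
    rw [Real.norm_eq_abs, abs_mul, abs_abs,
      abs_of_nonneg (le_of_lt (Real.rpow_pos_of_pos hc0 _)), abs_mul]
    have key : |H - 1/2| * |c ^ p - b ^ p| * c ^ (1/2 + γ)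
        ≤ |H - 1/2| * ((3/2 - H) * b ^ (p - 1) * t) * (b ^ (1/2 + γ) * (1 + t / B) ^ (1/2 + γ)) := by
      have h3 : (0:ℝ) ≤ |H - 1/2| := abs_nonneg _
      have h4 : (0:ℝ) ≤ c ^ (1/2 + γ) := (Real.rpow_pos_of_pos hc0 _).le
      have h5 : |c ^ p - b ^ p| ≤ (3/2 - H) * b ^ (p - 1) * t := by linarith [hmvt]
      have h6 : (0:ℝ) ≤ (3/2 - H) * b ^ (p - 1) * t :=
        mul_nonneg (mul_nonneg (by linarith) (Real.rpow_pos_of_pos hb0 (p-1)).le) ht.le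
      calc |H - 1/2| * |c ^ p - b ^ p| * c ^ (1/2 + γ)
          ≤ |H - 1/2| * ((3/2 - H) * b ^ (p - 1) * t) * c ^ (1/2 + γ) := by
            apply mul_le_mul_of_nonneg_right _ h4
            exact mul_le_mul_of_nonneg_left h5 h3
        _ ≤ |H - 1/2| * ((3/2 - H) * b ^ (p - 1) * t) * (b ^ (1/2 + γ) * (1 + t / B) ^ (1/2 + γ)) := by
            apply mul_le_mul_of_nonneg_left hcpow (by positivity)
    refine le_trans key (le_of_eq ?_)
    have hbsum : b ^ (p - 1) * b ^ (1/2 + γ) = b ^ (H - 2 + γ) := by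
      rw [← Real.rpow_add hb0]; congr 1; simp [hpdef]; ring
    rw [hCdef, ← hbsum]; ring
end

section
/- Let H ∈ (1/2, 1), t ∈ (0, T], a < -T, and ε ∈ (1/a, 0). Then ∫_{1/a}^{ε} |∂_s F_t(1/v)| · (1/|v|^3) dv ≤ T (3/2 - H)(1 + T/a)^{H-5/2} (-ε)^{1/2-H}, where F_t(s) = (-t-s)^{H-1/2} - (-s)^{H-1/2}. -/
open Real MeasureTheory intervalIntegral

lemma mvt_rpow {p x y : ℝ} (hp : p < 0) (hx : 0 < x) (hxy : x ≤ y) :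
    x ^ p - y ^ p ≤ (-p) * x ^ (p - 1) * (y - x) := by
  rcases eq_or_lt_of_le hxy with h | h
  · subst h; simp
  · have hcont : ContinuousOn (fun u : ℝ => u ^ p) (Set.Icc x y) := by
      apply ContinuousOn.rpow_const continuousOn_id
      intro u hu
      exact Or.inl (ne_of_gt (lt_of_lt_of_le hx hu.1))
    have hderiv : ∀ u ∈ Set.Ioo x y, HasDerivAt (fun u : ℝ => u ^ p) (p * u ^ (p - 1)) u := by
      intro u hu
      exact Real.hasDerivAt_rpow_const (Or.inl (ne_of_gt (hx.trans hu.1)))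
    obtain ⟨c, hc, hc'⟩ := exists_hasDerivAt_eq_slope (fun u : ℝ => u ^ p)
      (fun u => p * u ^ (p - 1)) h hcont hderiv
    have hyx : 0 < y - x := by linarith
    have key : x ^ p - y ^ p = (-p) * c ^ (p - 1) * (y - x) := by
      field_simp at hc'
      nlinarith [hc']
    rw [key]
    have hcle : c ^ (p - 1) ≤ x ^ (p - 1) :=
      Real.rpow_le_rpow_of_nonpos hx hc.1.le (by linarith)
    nlinarith [mul_le_mul_of_nonneg_left hcle (by linarith : (0:ℝ) ≤ -p)]

theorem inverted_integral_bound (H T t a ε : ℝ) (hH : 1/2 < H) (hH1 : H < 1)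
    (hT : 0 < T) (ha : a < -T) (ht0 : 0 < t) (htT : t ≤ T)
    (hε1 : 1/a < ε) (hε2 : ε < 0) :
    (∫ v in (1/a)..ε,
        |(H - 1/2) * ((-(1/v)) ^ (H - 3/2) - (-t - 1/v) ^ (H - 3/2))| * (1 / |v| ^ 3))
      ≤ T * (3/2 - H) * (1 + T / a) ^ (H - 5/2) * (-ε) ^ (1/2 - H) := by
  have ha0 : a < 0 := by linarith
  have hia : 1 / a < 0 := by
    apply div_neg_of_pos_of_neg one_pos ha0
  have hle : 1 / a ≤ ε := hε1.le
  have hTa : 0 < 1 + T / a := by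
    have h := div_pos_iff.mpr (Or.inr ⟨show a + T < 0 by linarith, ha0⟩)
    rw [add_div, div_self (ne_of_lt ha0)] at h
    linarith
  -- key pointwise facts
  have hkey : ∀ v ∈ Set.Icc (1/a) ε, v < 0 ∧ 1/v ≤ a ∧ T / a ≤ t * v := by
    intro v hv
    have hv0 : v < 0 := lt_of_le_of_lt hv.2 hε2
    have hva : 1 / v ≤ a := by
      rw [div_le_iff_of_neg hv0]
      have := mul_le_mul_of_nonpos_left hv.1 ha0.le
      calc a * v ≤ a * (1/a) := this
        _ = 1 := by rw [mul_one_div, div_self (ne_of_lt ha0)]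
    have h5 : T * (1/a) ≤ t * (1/a) := mul_le_mul_of_nonpos_right htT hia.le
    have h6 : t * (1/a) ≤ t * v := mul_le_mul_of_nonneg_left hv.1 ht0.le
    have h7 : T / a = T * (1/a) := by ring
    exact ⟨hv0, hva, by nlinarith⟩
  set K : ℝ := (H - 1/2) * (3/2 - H) * t * (1 + T/a) ^ (H - 5/2) with hK
  -- pointwise bound
  have hpt : ∀ v ∈ Set.Icc (1/a) ε,
      |(H - 1/2) * ((-(1/v)) ^ (H - 3/2) - (-t - 1/v) ^ (H - 3/2))| * (1 / |v| ^ 3)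
        ≤ K * (-v) ^ (-(1/2) - H) := by
    intro v hv
    obtain ⟨hv0, hva, htv⟩ := hkey v hv
    have htv1 : 0 < t * v + 1 := by linarith
    have hnv : 0 < -v := neg_pos.mpr hv0
    have hx : 0 < -t - 1/v := by linarith
    have hxy : -t - 1/v ≤ -(1/v) := by linarith
    have habs : |v| = -v := abs_of_neg hv0
    have h1 : (-(1/v)) ^ (H - 3/2) ≤ (-t - 1/v) ^ (H - 3/2) :=
      Real.rpow_le_rpow_of_nonpos hx hxy (by linarith)
    have h2 : |(H - 1/2) * ((-(1/v)) ^ (H - 3/2) - (-t - 1/v) ^ (H - 3/2))|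
        = (H - 1/2) * ((-t - 1/v) ^ (H - 3/2) - (-(1/v)) ^ (H - 3/2)) := by
      rw [abs_mul, abs_of_pos (by linarith : (0:ℝ) < H - 1/2), abs_of_nonpos (by linarith)]
      ring
    have h3 := mvt_rpow (show H - 3/2 < 0 by linarith) hx hxy
    rw [show -(H - 3/2) = 3/2 - H by ring, show -(1/v) - (-t - 1/v) = t by ring,
      show H - 3/2 - 1 = H - 5/2 by ring] at h3
    have h4 : (-t - 1/v) ^ (H - 5/2) = (t*v + 1) ^ (H - 5/2) * ((-v) ^ (H - 5/2))⁻¹ := by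
      rw [show -t - 1/v = (t*v + 1) / (-v) by field_simp [hv0.ne]; ring,
        Real.div_rpow htv1.le hnv.le, div_eq_mul_inv]
    have h9 : ((-v) ^ (H - 5/2))⁻¹ * (1/(-v) ^ 3) = (-v) ^ (-(1/2) - H) := by
      rw [← Real.rpow_neg hnv.le, show ((-v:ℝ) ^ 3) = (-v) ^ ((3:ℕ):ℝ) by
        rw [Real.rpow_natCast], one_div, ← Real.rpow_neg hnv.le, ← Real.rpow_add hnv]
      congr 1
      push_cast
      ring
    calc |(H - 1/2) * ((-(1/v)) ^ (H - 3/2) - (-t - 1/v) ^ (H - 3/2))| * (1 / |v| ^ 3)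
        = (H - 1/2) * ((-t - 1/v) ^ (H - 3/2) - (-(1/v)) ^ (H - 3/2)) * (1 / (-v) ^ 3) := by
          rw [h2, habs]
      _ ≤ (H - 1/2) * ((3/2 - H) * (-t - 1/v) ^ (H - 5/2) * t) * (1 / (-v) ^ 3) := by
          apply mul_le_mul_of_nonneg_right _ (by positivity)
          exact mul_le_mul_of_nonneg_left h3 (by linarith)
      _ = (H - 1/2) * (3/2 - H) * t * ((t*v + 1) ^ (H - 5/2) * (((-v) ^ (H - 5/2))⁻¹ * (1 / (-v) ^ 3))) := by
          rw [h4]; ring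
      _ = (H - 1/2) * (3/2 - H) * t * ((t*v + 1) ^ (H - 5/2) * (-v) ^ (-(1/2) - H)) := by
          rw [h9]
      _ ≤ (H - 1/2) * (3/2 - H) * t * ((1 + T/a) ^ (H - 5/2) * (-v) ^ (-(1/2) - H)) := by
          apply mul_le_mul_of_nonneg_left
          · exact mul_le_mul_of_nonneg_right
              (Real.rpow_le_rpow_of_nonpos hTa (by linarith) (by linarith))
              (Real.rpow_nonneg hnv.le _)
          · exact mul_nonneg (mul_nonneg (by linarith) (by linarith)) ht0.le
      _ = K * (-v) ^ (-(1/2) - H) := by rw [hK]; ring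
  -- continuity / integrability
  have hkey' : ∀ v ∈ Set.uIcc (1/a) ε, v < 0 ∧ 1/v ≤ a ∧ T / a ≤ t * v := by
    rw [Set.uIcc_of_le hle]; exact hkey
  have hcont1 : ContinuousOn (fun v : ℝ =>
      |(H - 1/2) * ((-(1/v)) ^ (H - 3/2) - (-t - 1/v) ^ (H - 3/2))| * (1 / |v| ^ 3))
      (Set.uIcc (1/a) ε) := by
    have hvne : ∀ v ∈ Set.uIcc (1/a) ε, v ≠ 0 := fun v hv => ne_of_lt (hkey' v hv).1
    apply ContinuousOn.mul
    · apply ContinuousOn.abs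
      apply continuousOn_const.mul
      apply ContinuousOn.sub
      · apply ContinuousOn.rpow_const (continuousOn_const.div continuousOn_id hvne).neg
        intro v hv
        have h1v : 1 / v < 0 := div_neg_of_pos_of_neg one_pos (hkey' v hv).1
        exact Or.inl (by simpa using ne_of_gt (neg_pos.mpr h1v))
      · apply ContinuousOn.rpow_const
          (continuousOn_const.sub (continuousOn_const.div continuousOn_id hvne))
        intro v hv
        obtain ⟨hv0, hva, -⟩ := hkey' v hv
        have : 0 < -t - 1/v := by linarith
        exact Or.inl (by simpa using ne_of_gt this)
    · apply continuousOn_const.div ((continuousOn_id.abs).pow 3)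
      intro v hv
      have hzz : v ≠ 0 := (hkey' v hv).1.ne
      simp only [id]
      exact pow_ne_zero _ (abs_ne_zero.mpr hzz)
  have hcont2 : ContinuousOn (fun v : ℝ => K * (-v) ^ (-(1/2) - H)) (Set.uIcc (1/a) ε) := by
    apply continuousOn_const.mul
    apply ContinuousOn.rpow_const continuousOn_id.neg
    intro v hv
    exact Or.inl (ne_of_gt (neg_pos.mpr (hkey' v hv).1))
  have hmono := intervalIntegral.integral_mono_on (μ := volume) hle
    (hcont1.intervalIntegrable) (hcont2.intervalIntegrable) hpt
  refine hmono.trans ?_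
  -- compute the RHS integral
  have hcomp : (∫ v in (1/a)..ε, K * (-v) ^ (-(1/2) - H))
      = K * ∫ u in (-ε)..(-(1/a)), u ^ (-(1/2) - H) := by
    rw [intervalIntegral.integral_const_mul, intervalIntegral.integral_comp_neg
      (fun u : ℝ => u ^ (-(1/2) - H))]
  rw [hcomp]
  have hεpos : 0 < -ε := neg_pos.mpr hε2
  have hiapos : 0 < -(1/a) := neg_pos.mpr hia
  rw [integral_rpow (Or.inr ⟨by intro h; norm_num at h; linarith, Set.notMem_uIcc_of_lt hεpos hiapos⟩)]
  rw [show -(1/2) - H + 1 = 1/2 - H by ring]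
  set A : ℝ := (-(1/a)) ^ (1/2 - H) with hA
  set B : ℝ := (-ε) ^ (1/2 - H) with hB
  set C : ℝ := (1 + T/a) ^ (H - 5/2) with hC
  have hA0 : 0 ≤ A := Real.rpow_nonneg hiapos.le _
  have hB0 : 0 ≤ B := Real.rpow_nonneg hεpos.le _
  have hC0 : 0 ≤ C := Real.rpow_nonneg hTa.le _
  have hne : (1/2 - H : ℝ) ≠ 0 := by intro h; linarith [sub_eq_zero.mp h]
  have h12 : (1/2 - H) * (1/2 - H)⁻¹ = 1 := mul_inv_cancel₀ hne
  have hEq : K * ((A - B) / (1/2 - H)) = (3/2 - H) * t * C * (B - A) := by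
    calc K * ((A - B) / (1/2 - H))
        = ((1/2 - H) * (1/2 - H)⁻¹) * ((3/2 - H) * t * C * (B - A)) := by
          rw [hK, div_eq_mul_inv]; ring
      _ = (3/2 - H) * t * C * (B - A) := by rw [h12]; ring
  rw [hEq]
  nlinarith [mul_nonneg (mul_nonneg (by linarith : (0:ℝ) ≤ 3/2 - H) ht0.le) (mul_nonneg hC0 hA0),
    mul_nonneg (mul_nonneg (by linarith : (0:ℝ) ≤ 3/2 - H) (by linarith : (0:ℝ) ≤ T - t)) (mul_nonneg hC0 hB0)]
end

section
/- Let H ∈ (1/2, 1), T > 0, a < -T, and 0 < γ < 1 - H. If h : [1/a, 0] → ℝ satisfies |h(v)| ≤ Y (-v)^{1/2-γ} for some Y > 0, then for every t ∈ (0, T] and ε ∈ (1/a, 0), |∫_{ε}^{0} ∂_s F_t(1/v) (1/v^3) h(v) dv| ≤ C Y (-ε)^{1-H-γ}, where C = (3/2-H)(H-1/2) T (1 + T/a)^{H-5/2} / (1 - H - γ) and F_t(s) = (-t-s)^{H-1/2} - (-s)^{H-1/2}. -/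
open Real MeasureTheory intervalIntegral

lemma aux_rpow_mvt {x y q : ℝ} (hx : 0 < x) (hxy : x < y) (hq : q < 0) :
    x ^ q - y ^ q ≤ (-q) * x ^ (q - 1) * (y - x) := by
  obtain ⟨c, hc, hderiv⟩ := exists_hasDerivAt_eq_slope (fun z => z ^ q)
    (fun z => q * z ^ (q - 1)) hxy
    (ContinuousOn.rpow_const continuousOn_id
      (fun z hz => Or.inl (ne_of_gt (lt_of_lt_of_le hx hz.1))))
    (fun z hz => Real.hasDerivAt_rpow_const (Or.inl (ne_of_gt (lt_trans hx hz.1))))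
  have hyx : (0:ℝ) < y - x := by linarith
  have heq : x ^ q - y ^ q = (-q) * c ^ (q - 1) * (y - x) := by
    have := hderiv
    field_simp at this
    nlinarith [this]
  rw [heq]
  have hcle : c ^ (q - 1) ≤ x ^ (q - 1) :=
    Real.rpow_le_rpow_of_nonpos hx hc.1.le (by linarith)
  have hnq : (0:ℝ) ≤ -q := by linarith
  exact mul_le_mul_of_nonneg_right (mul_le_mul_of_nonneg_left hcle hnq) hyx.le

theorem inverted_tail_integral_bound (H T a γ Y : ℝ) (h : ℝ → ℝ)
    (hH : 1/2 < H) (hH1 : H < 1) (hT : 0 < T) (ha : a < -T)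
    (hγ0 : 0 < γ) (hγ : γ < 1 - H) (hY : 0 < Y)
    (hh : ∀ v ∈ Set.Icc (1/a) (0:ℝ), |h v| ≤ Y * (-v) ^ (1/2 - γ)) :
    ∀ t ∈ Set.Ioc (0:ℝ) T, ∀ ε ∈ Set.Ioo (1/a) (0:ℝ),
      |∫ v in ε..(0:ℝ),
          ((H - 1/2) * ((-(1/v)) ^ (H - 3/2) - (-t - 1/v) ^ (H - 3/2))) * (1 / v ^ 3) * h v|
        ≤ ((3/2 - H) * (H - 1/2) * T * (1 + T / a) ^ (H - 5/2) / (1 - H - γ))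
            * Y * (-ε) ^ (1 - H - γ) := by
  intro t ht ε hε
  obtain ⟨ht0, htT⟩ := ht
  obtain ⟨hεa, hε0⟩ := hε
  have ha0 : a < 0 := by linarith
  have hTa : 0 < 1 + T / a := by
    have heq : (a + T) / a = 1 + T / a := by rw [add_div, div_self (ne_of_lt ha0)]
    rw [← heq]
    exact div_pos_of_neg_of_neg (by linarith) ha0
  set p : ℝ := -H - γ with hp
  have hp1 : (-1:ℝ) < p := by simp only [hp]; linarith
  have hp0 : p < 0 := by simp only [hp]; linarith
  set K : ℝ := (3/2 - H) * (H - 1/2) * T * (1 + T / a) ^ (H - 5/2) * Y with hK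
  have hKpos : 0 < K := by
    apply mul_pos (mul_pos (mul_pos (mul_pos (by linarith) (by linarith)) hT)
      (Real.rpow_pos_of_pos hTa _)) hY
  -- pointwise bound on Ioc ε 0
  have hpt : ∀ v ∈ Set.Ioc ε (0:ℝ),
      |((H - 1/2) * ((-(1/v)) ^ (H - 3/2) - (-t - 1/v) ^ (H - 3/2))) * (1 / v ^ 3) * h v|
        ≤ K * (-v) ^ p := by
    intro v hv
    rcases eq_or_lt_of_le hv.2 with hv0 | hv0
    · subst hv0
      simp [Real.zero_rpow (by linarith : p ≠ 0), le_of_lt hKpos, abs_of_nonneg]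
    · have hw : 0 < -v := by linarith
      have hva : 1/a < v := lt_trans hεa hv.1
      have h1va : 1/v < a := by
        rw [div_lt_iff_of_neg hv0]
        calc a * v < a * (1/a) := mul_lt_mul_of_neg_left hva ha0
          _ = 1 := mul_one_div_cancel (ne_of_lt ha0)
      set y : ℝ := -(1/v) with hy
      set x : ℝ := -t - 1/v with hx
      have hyT : T < y := by simp only [hy]; linarith
      have hx0 : 0 < x := by simp only [hx]; linarith
      have hxy : x < y := by simp only [hx, hy]; linarith
      set q : ℝ := H - 3/2 with hq
      have hq0 : q < 0 := by simp only [hq]; linarith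
      -- tv + 1
      have htv : 1 + T / a < t * v + 1 := by
        have h1 : t / a < t * v := by
          rw [div_lt_iff_of_neg ha0]
          have hav : a * v < 1 := by
            calc a * v < a * (1/a) := mul_lt_mul_of_neg_left hva ha0
              _ = 1 := mul_one_div_cancel (ne_of_lt ha0)
          nlinarith
        have h2 : T / a ≤ t / a := by
          have hd : t / a - T / a = (t - T) / a := by ring
          have : 0 ≤ (t - T) / a := by
            rw [le_div_iff_of_neg ha0]; linarith
          linarith
        linarith
      have htv0 : 0 < t * v + 1 := lt_trans hTa htv
      -- x = (t*v+1) * (-v)⁻¹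
      have hxeq : x = (t * v + 1) * (-v)⁻¹ := by
        simp only [hx]
        field_simp [ne_of_lt hv0]
        ring
      -- MVT bound
      have hmvt : x ^ q - y ^ q ≤ (3/2 - H) * x ^ (q - 1) * t := by
        have := aux_rpow_mvt hx0 hxy hq0
        have hyx : y - x = t := by simp only [hx, hy]; ring
        rw [hyx] at this
        have : x ^ q - y ^ q ≤ -q * x ^ (q-1) * t := this
        have hqq : -q = 3/2 - H := by simp only [hq]; ring
        rwa [hqq] at this
      -- x^(q-1) = (t*v+1)^(H-5/2) * (-v)^(5/2 - H)
      have hxq : x ^ (q - 1) = (t * v + 1) ^ (H - 5/2) * (-v) ^ (5/2 - H) := by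
        rw [hxeq, Real.mul_rpow htv0.le (inv_nonneg.mpr hw.le)]
        congr 1
        · congr 1; simp only [hq]; ring
        · rw [← Real.rpow_neg_one (-v), ← Real.rpow_mul hw.le]
          congr 1
          simp only [hq]; ring
      have hxqle : x ^ (q - 1) ≤ (1 + T / a) ^ (H - 5/2) * (-v) ^ (5/2 - H) := by
        rw [hxq]
        exact mul_le_mul_of_nonneg_right
          (Real.rpow_le_rpow_of_nonpos hTa htv.le (by linarith))
          (Real.rpow_nonneg hw.le _)
      -- abs of integrand
      have hyq : y ^ q < x ^ q := by
        apply Real.rpow_lt_rpow_of_neg hx0 hxy hq0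
      have habs1 : |y ^ q - x ^ q| = x ^ q - y ^ q := by
        rw [abs_sub_comm]; exact abs_of_pos (by linarith)
      have hv3 : |1 / v ^ 3| = ((-v) ^ (3:ℝ))⁻¹ := by
        rw [show ((3:ℝ)) = ((3:ℕ):ℝ) by norm_num, Real.rpow_natCast]
        rw [abs_div, abs_one, abs_pow, abs_of_neg hv0, one_div]
      have hhv : |h v| ≤ Y * (-v) ^ (1/2 - γ) :=
        hh v ⟨le_of_lt (lt_trans hεa hv.1), hv0.le⟩
      have hH2 : (0:ℝ) < H - 1/2 := by linarith
      set M : ℝ := (3/2 - H) * ((1 + T / a) ^ (H - 5/2) * (-v) ^ (5/2 - H)) * T with hM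
      have hM0 : 0 ≤ M :=
        mul_nonneg (mul_nonneg (by linarith) (by positivity)) hT.le
      have hI0 : (0:ℝ) ≤ ((-v) ^ (3:ℝ))⁻¹ := by positivity
      have hmid : x ^ q - y ^ q ≤ M := by
        calc x ^ q - y ^ q ≤ (3/2 - H) * x ^ (q - 1) * t := hmvt
          _ ≤ (3/2 - H) * ((1 + T / a) ^ (H - 5/2) * (-v) ^ (5/2 - H)) * t :=
              mul_le_mul_of_nonneg_right
                (mul_le_mul_of_nonneg_left hxqle (by linarith)) ht0.le
          _ ≤ M :=
              mul_le_mul_of_nonneg_left htT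
                (mul_nonneg (by linarith) (by positivity))
      calc |((H - 1/2) * (y ^ q - x ^ q)) * (1 / v ^ 3) * h v|
          = (H - 1/2) * |y ^ q - x ^ q| * |1 / v ^ 3| * |h v| := by
            rw [abs_mul, abs_mul, abs_mul, abs_of_pos hH2]
        _ = (H - 1/2) * (x ^ q - y ^ q) * ((-v) ^ (3:ℝ))⁻¹ * |h v| := by
            rw [habs1, hv3]
        _ ≤ (H - 1/2) * M * ((-v) ^ (3:ℝ))⁻¹ * (Y * (-v) ^ (1/2 - γ)) := by
            have step1 : (H - 1/2) * (x ^ q - y ^ q) * ((-v) ^ (3:ℝ))⁻¹ * |h v|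
                ≤ (H - 1/2) * M * ((-v) ^ (3:ℝ))⁻¹ * |h v| := by
              apply mul_le_mul_of_nonneg_right _ (abs_nonneg _)
              apply mul_le_mul_of_nonneg_right _ hI0
              exact mul_le_mul_of_nonneg_left hmid hH2.le
            refine step1.trans ?_
            exact mul_le_mul_of_nonneg_left hhv
              (mul_nonneg (mul_nonneg hH2.le hM0) hI0)
        _ = K * (-v) ^ p := by
            rw [hK, hp, hM]
            have h3 : (-v) ^ (5/2 - H) * ((-v) ^ (3:ℝ))⁻¹ * (-v) ^ (1/2 - γ)
                = (-v) ^ (-H - γ) := by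
              rw [← Real.rpow_neg hw.le (3:ℝ), ← Real.rpow_add hw, ← Real.rpow_add hw]
              congr 1; ring
            calc (H - 1/2) * ((3/2 - H) * ((1 + T / a) ^ (H - 5/2) * (-v) ^ (5/2 - H)) * T)
                  * ((-v) ^ (3:ℝ))⁻¹ * (Y * (-v) ^ (1/2 - γ))
                = (3/2 - H) * (H - 1/2) * T * (1 + T / a) ^ (H - 5/2) * Y
                  * ((-v) ^ (5/2 - H) * ((-v) ^ (3:ℝ))⁻¹ * (-v) ^ (1/2 - γ)) := by ring
              _ = (3/2 - H) * (H - 1/2) * T * (1 + T / a) ^ (H - 5/2) * Y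
                  * (-v) ^ (-H - γ) := by rw [h3]
  -- integrability of bound
  have hint : IntervalIntegrable (fun v => K * (-v) ^ p) volume ε 0 := by
    apply IntervalIntegrable.const_mul
    have h1 : IntervalIntegrable (fun u : ℝ => u ^ p) volume (-ε) (-0) :=
      intervalIntegrable_rpow' hp1
    have := (IntervalIntegrable.iff_comp_neg (by simp)).mp h1
    simpa using this
  -- value of bound integral
  have hval : ∫ v in ε..(0:ℝ), K * (-v) ^ p = K * ((-ε) ^ (p + 1) / (p + 1)) := by
    rw [intervalIntegral.integral_const_mul]
    congr 1
    have h1 : (∫ v in ε..(0:ℝ), (-v) ^ p) = ∫ u in (-0:ℝ)..(-ε), u ^ p :=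
      intervalIntegral.integral_comp_neg (fun u => u ^ p)
    rw [h1]
    norm_num
    rw [integral_rpow (Or.inl hp1)]
    rw [Real.zero_rpow (by linarith : p + 1 ≠ 0)]
    ring
  have hbound := intervalIntegral.norm_integral_le_abs_of_norm_le
    (μ := volume) (f := fun v =>
      ((H - 1/2) * ((-(1/v)) ^ (H - 3/2) - (-t - 1/v) ^ (H - 3/2))) * (1 / v ^ 3) * h v)
    (g := fun v => K * (-v) ^ p) (a := ε) (b := 0)
    (by
      rw [Set.uIoc_of_le hε0.le]
      exact (ae_restrict_iff' measurableSet_Ioc).mpr (Filter.Eventually.of_forall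
        (fun v hv => hpt v hv)))
    hint
  rw [Real.norm_eq_abs] at hbound
  calc |∫ v in ε..(0:ℝ),
          ((H - 1/2) * ((-(1/v)) ^ (H - 3/2) - (-t - 1/v) ^ (H - 3/2))) * (1 / v ^ 3) * h v|
      ≤ |∫ v in ε..(0:ℝ), K * (-v) ^ p| := hbound
    _ = K * ((-ε) ^ (p + 1) / (p + 1)) := by
        rw [hval, abs_of_nonneg]
        apply mul_nonneg hKpos.le
        apply div_nonneg (Real.rpow_nonneg (by linarith) _) (by simp only [hp]; linarith)
    _ = ((3/2 - H) * (H - 1/2) * T * (1 + T / a) ^ (H - 5/2) / (1 - H - γ))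
            * Y * (-ε) ^ (1 - H - γ) := by
        rw [hK, hp]
        have : -H - γ + 1 = 1 - H - γ := by ring
        rw [this]
        ring
end

section
/- Let H ∈ (0, 1/2), 0 < γ < H, t > 0, ε < 0, and Y > 0. Suppose g : ℝ → ℝ satisfies |g(u) - g(v)| ≤ Y |u - v|^{1/2-γ} for all u, v. Then |∫_{max(ε,-t)}^{0} [(-s)^{H-1/2} - (-s-ε)^{H-1/2}] dg(s)| interpreted via Fubini as ∫_0^{-ε-max(ε,-t)} (1/2-H) x^{H-3/2} [g(min(-x-ε,0)) - g(max(-t, ε, -x))] dx is bounded by ((1/2-H) 2^{H-2γ+1/2}/(H-γ)) Y (-ε)^{H-γ}. -/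
open Real MeasureTheory intervalIntegral

theorem fubini_holder_bound_A1 (H γ t ε Y : ℝ) (g : ℝ → ℝ)
    (hH0 : 0 < H) (hH : H < 1/2) (hγ0 : 0 < γ) (hγ : γ < H)
    (ht : 0 < t) (hε : ε < 0) (hY : 0 < Y)
    (hg : ∀ u v : ℝ, |g u - g v| ≤ Y * |u - v| ^ (1/2 - γ)) :
    |∫ x in (0:ℝ)..(-ε - max ε (-t)),
        (1/2 - H) * x ^ (H - 3/2) * (g (min (-x - ε) 0) - g (max (max (-t) ε) (-x)))|
      ≤ ((1/2 - H) * 2 ^ (H - 2*γ + 1/2) / (H - γ)) * Y * (-ε) ^ (H - γ) := by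
  set u : ℝ := -ε - max ε (-t) with hu_def
  have hmax_le : max ε (-t) ≤ 0 := max_le hε.le (by linarith)
  have hu0 : 0 < u := by simp only [hu_def]; linarith
  have hu2 : u ≤ 2 * (-ε) := by
    have : ε ≤ max ε (-t) := le_max_left _ _
    simp only [hu_def]; linarith
  have hut : u ≤ -ε + t := by
    have : -t ≤ max ε (-t) := le_max_right _ _
    simp only [hu_def]; linarith
  set C : ℝ := (1/2 - H) * Y * 2 ^ ((1:ℝ)/2 - γ) with hC_def
  have h2pos : (0:ℝ) < 2 ^ ((1:ℝ)/2 - γ) := rpow_pos_of_pos two_pos _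
  have hCpos : 0 < C := mul_pos (mul_pos (by linarith) hY) h2pos
  have hr : (-1:ℝ) < H - γ - 1 := by linarith
  -- the dominating function
  have hφint : IntegrableOn (fun x : ℝ => C * x ^ (H - γ - 1)) (Set.Ioc 0 u) volume := by
    have := (intervalIntegral.intervalIntegrable_rpow' (a := (0:ℝ)) (b := u) hr).const_mul C
    rwa [intervalIntegrable_iff_integrableOn_Ioc_of_le hu0.le] at this
  -- pointwise bound
  have hbound : ∀ x ∈ Set.Ioc (0:ℝ) u,
      ‖(1/2 - H) * x ^ (H - 3/2) * (g (min (-x - ε) 0) - g (max (max (-t) ε) (-x)))‖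
        ≤ C * x ^ (H - γ - 1) := by
    intro x hx
    obtain ⟨hx0, hxu⟩ := hx
    set a : ℝ := min (-x - ε) 0 with ha_def
    set b : ℝ := max (max (-t) ε) (-x) with hb_def
    have hba : b ≤ a := by
      have h1 : -t ≤ a := le_min (by linarith) (by linarith)
      have h2 : ε ≤ a := le_min (by linarith) hε.le
      have h3 : -x ≤ a := le_min (by linarith) (by linarith)
      exact max_le (max_le h1 h2) h3
    have hab : |a - b| ≤ 2 * x := by
      rw [abs_of_nonneg (by linarith)]
      rcases le_total x (-ε) with h | h
      · have h1 : a ≤ 0 := min_le_right _ _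
        have h2 : -x ≤ b := le_max_right _ _
        linarith
      · have h1 : a ≤ -x - ε := min_le_left _ _
        have h2 : ε ≤ b := le_trans (le_max_right _ _) (le_max_left _ _)
        linarith
    have hgab : |g a - g b| ≤ Y * (2 * x) ^ ((1:ℝ)/2 - γ) :=
      (hg a b).trans (mul_le_mul_of_nonneg_left
        (Real.rpow_le_rpow (abs_nonneg _) hab (by linarith)) hY.le)
    have hxpow : (0:ℝ) < x ^ (H - 3/2) := rpow_pos_of_pos hx0 _
    have hcoef : (0:ℝ) < (1/2 - H) * x ^ (H - 3/2) := mul_pos (by linarith) hxpow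
    rw [Real.norm_eq_abs, abs_mul, abs_of_pos hcoef]
    have step : (1/2 - H) * x ^ (H - 3/2) * |g a - g b|
        ≤ (1/2 - H) * x ^ (H - 3/2) * (Y * (2 * x) ^ ((1:ℝ)/2 - γ)) :=
      mul_le_mul_of_nonneg_left hgab hcoef.le
    refine step.trans (le_of_eq ?_)
    rw [Real.mul_rpow (by norm_num) hx0.le, hC_def,
      show x ^ (H - γ - 1) = x ^ (H - 3/2) * x ^ ((1:ℝ)/2 - γ) by
        rw [← Real.rpow_add hx0]; congr 1; ring]
    ring
  -- main estimate
  rw [intervalIntegral.integral_of_le hu0.le, ← Real.norm_eq_abs]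
  have hae : ∀ᵐ x ∂(volume.restrict (Set.Ioc (0:ℝ) u)),
      ‖(1/2 - H) * x ^ (H - 3/2) * (g (min (-x - ε) 0) - g (max (max (-t) ε) (-x)))‖
        ≤ C * x ^ (H - γ - 1) :=
    (ae_restrict_mem measurableSet_Ioc).mono hbound
  have key := MeasureTheory.norm_integral_le_of_norm_le hφint hae
  refine key.trans ?_
  have hint_eq : ∫ x in Set.Ioc (0:ℝ) u, C * x ^ (H - γ - 1)
      = C * (u ^ (H - γ) / (H - γ)) := by
    rw [← intervalIntegral.integral_of_le hu0.le, intervalIntegral.integral_const_mul,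
      integral_rpow (Or.inl hr)]
    rw [show H - γ - 1 + 1 = H - γ by ring, Real.zero_rpow (by linarith : H - γ ≠ 0)]
    ring
  rw [hint_eq]
  have hupow : u ^ (H - γ) ≤ (2 * (-ε)) ^ (H - γ) :=
    Real.rpow_le_rpow hu0.le hu2 (by linarith)
  have hfinal : C * (u ^ (H - γ) / (H - γ))
      ≤ C * ((2 * (-ε)) ^ (H - γ) / (H - γ)) := by
    gcongr
  refine hfinal.trans (le_of_eq ?_)
  rw [Real.mul_rpow (by norm_num) (by linarith : (0:ℝ) ≤ -ε), hC_def,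
    show (2:ℝ) ^ (H - 2*γ + 1/2) = 2 ^ ((1:ℝ)/2 - γ) * 2 ^ (H - γ) by
      rw [← Real.rpow_add two_pos]; congr 1; ring]
  ring
end

section
/- Let H ∈ (0, 1/2), 0 < γ < H, T > 0, a < -T, and ε < 0. Suppose g : [a, 0] → ℝ satisfies |g(u) - g(v)| ≤ Y|u-v|^{1/2-γ}. Then for every t ∈ (0, T] with t < -ε, |∫_{max(a, -t+ε)}^{-t} F_t(s) dg(s)|, interpreted via the Fubini representation ∫_0^{-max(a,-t+ε)} (1/2-H) x^{H-3/2}[g(min(-x,-t)) - g(max(-t-x, a, -t+ε))] dx, is at most ((1/2-H)/(H-γ)) 2^{H-γ} Y (-ε)^{H-γ}, where F_t(s) = (-t-s)^{H-1/2} - (-s)^{H-1/2}. -/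
open Real MeasureTheory intervalIntegral

theorem fubini_holder_bound_A2 (H γ T a ε Y : ℝ) (g : ℝ → ℝ)
    (hH0 : 0 < H) (hH : H < 1/2) (hγ0 : 0 < γ) (hγ : γ < H)
    (hT : 0 < T) (ha : a < -T) (hε : ε < 0) (hY : 0 < Y)
    (hg : ∀ u ∈ Set.Icc a (0:ℝ), ∀ v ∈ Set.Icc a (0:ℝ),
      |g u - g v| ≤ Y * |u - v| ^ (1/2 - γ)) :
    ∀ t ∈ Set.Ioc (0:ℝ) T, t < -ε →
      |∫ x in (0:ℝ)..(-(max a (-t + ε))),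
          (1/2 - H) * x ^ (H - 3/2)
            * (g (min (-x) (-t)) - g (max (max (-t - x) a) (-t + ε)))|
        ≤ ((1/2 - H) / (H - γ)) * 2 ^ (H - γ) * Y * (-ε) ^ (H - γ) := by
  intro t ht htε
  obtain ⟨ht0, htT⟩ := ht
  set u : ℝ := -(max a (-t + ε)) with hu
  have hmax_neg : max a (-t + ε) < 0 := max_lt (by linarith) (by linarith)
  have hu0 : 0 < u := by simp only [hu]; linarith
  have hu_le : u ≤ 2 * (-ε) := by
    have h1 : -t + ε ≤ max a (-t + ε) := le_max_right _ _
    simp only [hu]; linarith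
  have hau : a ≤ -u := by simp only [hu, neg_neg]; exact le_max_left _ _
  have hHγ : 0 < H - γ := by linarith
  have hH2 : 0 < 1/2 - H := by linarith
  have key : ∀ x ∈ Set.Ioc (0:ℝ) u,
      ‖(1/2 - H) * x ^ (H - 3/2)
          * (g (min (-x) (-t)) - g (max (max (-t - x) a) (-t + ε)))‖
        ≤ (1/2 - H) * Y * x ^ (H - γ - 1) := by
    intro x hx
    obtain ⟨hx0, hxu⟩ := hx
    have hxte : x ≤ t - ε := by
      have h1 : -t + ε ≤ max a (-t + ε) := le_max_right _ _
      have : u ≤ t - ε := by simp only [hu]; linarith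
      linarith
    have hxa : a ≤ -x := by linarith
    set u' : ℝ := min (-x) (-t) with hu'
    set v' : ℝ := max (max (-t - x) a) (-t + ε) with hv'
    have hu'mem : u' ∈ Set.Icc a (0:ℝ) := by
      constructor
      · exact le_min (by linarith) (by linarith)
      · exact le_trans (min_le_left _ _) (by linarith)
    have hv'mem : v' ∈ Set.Icc a (0:ℝ) := by
      constructor
      · exact le_trans (le_max_right _ _) (le_max_left _ _)
      · exact max_le (max_le (by linarith) (by linarith)) (by linarith)
    have hv'u' : v' ≤ u' := by
      apply max_le (max_le ?_ ?_) ?_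
      · exact le_min (by linarith) (by linarith)
      · exact le_min (by linarith) (by linarith)
      · exact le_min (by linarith) (by linarith)
    have hdiff : u' - v' ≤ x := by
      have h1 : u' ≤ -t := min_le_right _ _
      have h2 : -t - x ≤ v' := le_trans (le_max_left _ _) (le_max_left _ _)
      linarith
    have hgd : |g u' - g v'| ≤ Y * x ^ (1/2 - γ) := by
      refine le_trans (hg u' hu'mem v' hv'mem) ?_
      apply mul_le_mul_of_nonneg_left _ hY.le
      apply Real.rpow_le_rpow (abs_nonneg _) _ (by linarith)
      rw [abs_of_nonneg (by linarith)]
      exact hdiff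
    have hxp : (0:ℝ) < x ^ (H - 3/2) := Real.rpow_pos_of_pos hx0 _
    rw [Real.norm_eq_abs, abs_mul, abs_mul, abs_of_pos hH2, abs_of_pos hxp]
    calc (1/2 - H) * x ^ (H - 3/2) * |g u' - g v'|
        ≤ (1/2 - H) * x ^ (H - 3/2) * (Y * x ^ (1/2 - γ)) := by
          apply mul_le_mul_of_nonneg_left hgd (by positivity)
      _ = (1/2 - H) * Y * x ^ (H - γ - 1) := by
          rw [show H - γ - 1 = (H - 3/2) + (1/2 - γ) by ring, Real.rpow_add hx0]
          ring
  have hint : IntervalIntegrable (fun x : ℝ => (1/2 - H) * Y * x ^ (H - γ - 1))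
      volume 0 u := (intervalIntegral.intervalIntegrable_rpow' (by linarith)).const_mul _
  have hbound : |∫ x in (0:ℝ)..u,
      (1/2 - H) * x ^ (H - 3/2)
        * (g (min (-x) (-t)) - g (max (max (-t - x) a) (-t + ε)))|
      ≤ |∫ x in (0:ℝ)..u, (1/2 - H) * Y * x ^ (H - γ - 1)| := by
    rw [← Real.norm_eq_abs]
    apply intervalIntegral.norm_integral_le_abs_of_norm_le _ hint
    rw [ae_restrict_iff' measurableSet_uIoc]
    refine Filter.Eventually.of_forall fun x hx => ?_
    rw [Set.uIoc_of_le hu0.le] at hx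
    exact key x hx
  have hval : ∫ x in (0:ℝ)..u, (1/2 - H) * Y * x ^ (H - γ - 1)
      = (1/2 - H) * Y * (u ^ (H - γ) / (H - γ)) := by
    rw [intervalIntegral.integral_const_mul, integral_rpow (Or.inl (by linarith))]
    rw [show H - γ - 1 + 1 = H - γ by ring, Real.zero_rpow hHγ.ne']
    ring
  have hup : u ^ (H - γ) ≤ 2 ^ (H - γ) * (-ε) ^ (H - γ) := by
    rw [← Real.mul_rpow (by norm_num) (by linarith)]
    exact Real.rpow_le_rpow hu0.le hu_le hHγ.le
  refine hbound.trans ?_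
  rw [hval, abs_of_nonneg (by positivity)]
  calc (1/2 - H) * Y * (u ^ (H - γ) / (H - γ))
      ≤ (1/2 - H) * Y * ((2 ^ (H - γ) * (-ε) ^ (H - γ)) / (H - γ)) := by gcongr
    _ = ((1/2 - H) / (H - γ)) * 2 ^ (H - γ) * Y * (-ε) ^ (H - γ) := by ring
end

section
/- Let H ∈ (0, 1/2), t ∈ (0, T], a < -T, ε < 0. Then |F_t(max(a, -t+ε))| + |F_t(a)| + ∫_a^{max(a,-t+ε)} |∂_s F_t(s)| ds = 2[(-t - max(a,-t+ε))^{H-1/2} - (-max(a,-t+ε))^{H-1/2}] ≤ 2((-ε)^{H-1/2} + (-T-a)^{H-1/2}), where F_t(s) = (-t-s)^{H-1/2} - (-s)^{H-1/2}. -/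
open Real MeasureTheory intervalIntegral

theorem F_variation_bound_H_lt_half (H T t a ε : ℝ) (hH0 : 0 < H) (hH : H < 1/2)
    (hT : 0 < T) (ht0 : 0 < t) (htT : t ≤ T) (ha : a < -T) (hε : ε < 0) :
    (|(-t - max a (-t + ε)) ^ (H - 1/2) - (-(max a (-t + ε))) ^ (H - 1/2)|
        + |(-t - a) ^ (H - 1/2) - (-a) ^ (H - 1/2)|
        + (∫ s in a..(max a (-t + ε)),
            |(H - 1/2) * ((-s) ^ (H - 3/2) - (-t - s) ^ (H - 3/2))|)
      = 2 * ((-t - max a (-t + ε)) ^ (H - 1/2) - (-(max a (-t + ε))) ^ (H - 1/2))) ∧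
    2 * ((-t - max a (-t + ε)) ^ (H - 1/2) - (-(max a (-t + ε))) ^ (H - 1/2))
      ≤ 2 * ((-ε) ^ (H - 1/2) + (-T - a) ^ (H - 1/2)) := by
  have hb_lt : max a (-t + ε) < -t := max_lt (by linarith) (by linarith)
  set b := max a (-t + ε) with hbdef
  have hab : a ≤ b := le_max_left _ _
  have hFpos : ∀ s, s < -t → 0 < (-t - s) ^ (H - 1/2) - (-s) ^ (H - 1/2) := by
    intro s hs
    have h1 : 0 < -t - s := by linarith
    have h2 : -t - s < -s := by linarith
    have := Real.rpow_lt_rpow_of_neg h1 h2 (by linarith : H - 1/2 < 0)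
    linarith
  have hderiv : ∀ s ∈ Set.uIcc a b, HasDerivAt
      (fun x => (-t - x) ^ (H - 1/2) - (-x) ^ (H - 1/2))
      ((H - 1/2) * ((-s) ^ (H - 3/2) - (-t - s) ^ (H - 3/2))) s := by
    intro s hs
    rw [Set.uIcc_of_le hab] at hs
    have h1 : 0 < -t - s := by have := hs.2; linarith
    have h2 : 0 < -s := by have := hs.2; linarith
    have d1 : HasDerivAt (fun x : ℝ => -t - x) (-1) s := by
      simpa using (hasDerivAt_id s).const_sub (-t)
    have d2 : HasDerivAt (fun x : ℝ => -x) (-1) s := by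
      exact hasDerivAt_neg s
    have e1 : HasDerivAt (fun x => (-t - x) ^ (H - 1/2))
        ((H - 1/2) * (-t - s) ^ (H - 1/2 - 1) * (-1)) s :=
      (Real.hasDerivAt_rpow_const (Or.inl h1.ne')).comp s d1
    have e2 : HasDerivAt (fun x => (-x) ^ (H - 1/2))
        ((H - 1/2) * (-s) ^ (H - 1/2 - 1) * (-1)) s :=
      (Real.hasDerivAt_rpow_const (Or.inl h2.ne')).comp s d2
    have := e1.sub e2
    have hexp : H - 1/2 - 1 = H - 3/2 := by ring
    rw [hexp] at this
    exact this.congr_deriv (by ring)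
  have hcont : ContinuousOn
      (fun s => (H - 1/2) * ((-s) ^ (H - 3/2) - (-t - s) ^ (H - 3/2))) (Set.uIcc a b) := by
    rw [Set.uIcc_of_le hab]
    apply ContinuousOn.mul continuousOn_const
    apply ContinuousOn.sub
    · apply ContinuousOn.rpow_const (by fun_prop)
      intro s hs
      exact Or.inl (by have := hs.2; intro h; nlinarith [hs.2] : -s ≠ 0)
    · apply ContinuousOn.rpow_const (by fun_prop)
      intro s hs
      exact Or.inl (by have := hs.2; intro h; nlinarith [hs.2] : -t - s ≠ 0)
  have hint : IntervalIntegrable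
      (fun s => (H - 1/2) * ((-s) ^ (H - 3/2) - (-t - s) ^ (H - 3/2))) volume a b :=
    hcont.intervalIntegrable
  have hnonneg : ∀ s ∈ Set.uIcc a b,
      0 ≤ (H - 1/2) * ((-s) ^ (H - 3/2) - (-t - s) ^ (H - 3/2)) := by
    intro s hs
    rw [Set.uIcc_of_le hab] at hs
    have h1 : 0 < -t - s := by have := hs.2; linarith
    have h2 : -t - s < -s := by linarith
    have := Real.rpow_lt_rpow_of_neg h1 h2 (by linarith : H - 3/2 < 0)
    nlinarith
  have habs : (∫ s in a..b, |(H - 1/2) * ((-s) ^ (H - 3/2) - (-t - s) ^ (H - 3/2))|)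
      = ∫ s in a..b, (H - 1/2) * ((-s) ^ (H - 3/2) - (-t - s) ^ (H - 3/2)) := by
    apply intervalIntegral.integral_congr
    intro s hs
    exact abs_of_nonneg (hnonneg s hs)
  have hFTC := intervalIntegral.integral_eq_sub_of_hasDerivAt hderiv hint
  have hFb := hFpos b hb_lt
  have hFa := hFpos a (by linarith)
  constructor
  · rw [habs, hFTC, abs_of_pos hFb, abs_of_pos hFa]
    ring
  · have h1 : 0 < -t - b := by linarith
    have h2 : (0:ℝ) < -b := by linarith
    have hbn : 0 ≤ (-b) ^ (H - 1/2) := Real.rpow_nonneg h2.le _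
    have hεp : (0:ℝ) ≤ (-ε) ^ (H - 1/2) := Real.rpow_nonneg (by linarith) _
    have hTa : (0:ℝ) ≤ (-T - a) ^ (H - 1/2) := Real.rpow_nonneg (by linarith) _
    have hmain : (-t - b) ^ (H - 1/2) ≤ (-ε) ^ (H - 1/2) + (-T - a) ^ (H - 1/2) := by
      rcases max_cases a (-t + ε) with ⟨hbe, hle⟩ | ⟨hbe, hle⟩
      · -- b = a
        have hba : b = a := hbe
        rw [hba]
        have : (-t - a) ^ (H - 1/2) ≤ (-T - a) ^ (H - 1/2) :=
          Real.rpow_le_rpow_of_nonpos (by linarith) (by linarith) (by linarith)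
        linarith
      · -- b = -t + ε
        have hbb : -t - b = -ε := by rw [hbdef, hbe]; ring
        rw [hbb]; linarith
    linarith
end
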